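/- arXiv:math/0204028 — 2 statements merged into one kernel-verified Lean document; each statement's English description precedes it below -/
import Mathlib

section
/- If t ↦ (π(t),p(t)) is a solution of (60) on an interval J containing 0 and p(0) = 0, then p(t) = 0 for all t ∈ J, and moreover ‖π(t)‖ is constant on J (i.e. the set {p = 0} is invariant and the subcasimir ‖π‖ is conserved on it). -/
noncomputable section

open scoped RealInnerProductSpace

/-- ℝ³ with the standard (Euclidean) inner product and norm. -/
abbrev E3 : Type := EuclideanSpace ℝ (Fin 3)

/-- Build a vector of `E3` from its three coordinates. -/
def vec3 (x y z : ℝ) : E3 := (WithLp.equiv 2 (Fin 3 → ℝ)).symm ![x, y, z]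

/-- The standard cross product on ℝ³. -/
def cross3 (u v : E3) : E3 :=
  vec3 (u 1 * v 2 - u 2 * v 1) (u 2 * v 0 - u 0 * v 2) (u 0 * v 1 - u 1 * v 0)

/-- The vertical unit vector k = (0,0,1). -/
def kvec : E3 := vec3 0 0 1

/-- 𝐈⁻¹ u = (u₁/I₁, u₂/I₂, u₃/I₃). -/
def Iinv (I1 I2 I3 : ℝ) (u : E3) : E3 := vec3 (u 0 / I1) (u 1 / I2) (u 2 / I3)

/-- 𝐌⁻¹ u = (u₁/M₁, u₂/M₂, u₃/M₃). -/
def Minv (M1 M2 M3 : ℝ) (u : E3) : E3 := vec3 (u 0 / M1) (u 1 / M2) (u 2 / M3)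

/-- `(pm, pv) : ℝ → ℝ³ × ℝ³` is a (global) solution of the underwater-vehicle
Poisson system (60): dπ/dt = π×(𝐈⁻¹π) + p×(𝐌⁻¹p), dp/dt = p×(𝐈⁻¹π). -/
def IsSol60 (I1 I2 I3 M1 M2 M3 : ℝ) (pm pv : ℝ → E3) : Prop :=
  (∀ t : ℝ, HasDerivAt pm
      (cross3 (pm t) (Iinv I1 I2 I3 (pm t)) + cross3 (pv t) (Minv M1 M2 M3 (pv t))) t) ∧
  (∀ t : ℝ, HasDerivAt pv (cross3 (pv t) (Iinv I1 I2 I3 (pm t))) t)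

/-- Solution of (60) on a subset `J ⊆ ℝ`. -/
def IsSol60On (I1 I2 I3 M1 M2 M3 : ℝ) (J : Set ℝ) (pm pv : ℝ → E3) : Prop :=
  (∀ t ∈ J, HasDerivWithinAt pm
      (cross3 (pm t) (Iinv I1 I2 I3 (pm t)) + cross3 (pv t) (Minv M1 M2 M3 (pv t))) J t) ∧
  (∀ t ∈ J, HasDerivWithinAt pv (cross3 (pv t) (Iinv I1 I2 I3 (pm t))) J t)

/-- The blown-up space P̂ = {(w,ẇ,a,γ) : ‖w‖ = 1, w·ẇ = 0, a ≥ 0} ⊆ ℝ³×ℝ³×ℝ×ℝ. -/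
def Phat : Set (E3 × E3 × ℝ × ℝ) :=
  {x | ‖x.1‖ = 1 ∧ ⟪x.1, x.2.1⟫ = 0 ∧ 0 ≤ x.2.2.1}

/-- The blow-down map β(w,ẇ,a,γ) = (ẇ + γw, aw). -/
def blowdown (x : E3 × E3 × ℝ × ℝ) : E3 × E3 :=
  (x.2.1 + x.2.2.2 • x.1, x.2.2.1 • x.1)

/-- `(w, dw) : ℝ → ℝ³ × ℝ³` is a (global) solution of the blown-up dynamics (8)
with fixed parameters `a`, `γ`:
dw/dt = w×(𝐈⁻¹(ẇ+γw)), dẇ/dt = ẇ×(𝐈⁻¹(ẇ+γw)) + a² w×(𝐌⁻¹w). -/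
def IsSol8 (I1 I2 I3 M1 M2 M3 a γ : ℝ) (w dw : ℝ → E3) : Prop :=
  (∀ t : ℝ, HasDerivAt w (cross3 (w t) (Iinv I1 I2 I3 (dw t + γ • w t))) t) ∧
  (∀ t : ℝ, HasDerivAt dw
      (cross3 (dw t) (Iinv I1 I2 I3 (dw t + γ • w t))
        + a ^ 2 • cross3 (w t) (Minv M1 M2 M3 (w t))) t)

/-- Solution of (8) on a subset `J ⊆ ℝ`. -/
def IsSol8On (I1 I2 I3 M1 M2 M3 a γ : ℝ) (J : Set ℝ) (w dw : ℝ → E3) : Prop :=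
  (∀ t ∈ J, HasDerivWithinAt w (cross3 (w t) (Iinv I1 I2 I3 (dw t + γ • w t))) J t) ∧
  (∀ t ∈ J, HasDerivWithinAt dw
      (cross3 (dw t) (Iinv I1 I2 I3 (dw t + γ • w t))
        + a ^ 2 • cross3 (w t) (Minv M1 M2 M3 (w t))) J t)


lemma inner_cross_self' (u v : E3) : ⟪u, cross3 u v⟫ = 0 := by
  simp [cross3, vec3, PiLp.inner_apply, Fin.sum_univ_three, WithLp.equiv_symm_apply, PiLp.toLp_apply]
  ring

lemma cross3_zero_left (v : E3) : cross3 0 v = 0 := by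
  ext i
  fin_cases i <;> simp [cross3, vec3, WithLp.equiv_symm_apply, PiLp.toLp_apply]

lemma const_of_deriv0' {f : ℝ → ℝ} {J : Set ℝ} (hJ : Convex ℝ J)
    (h : ∀ t ∈ J, HasDerivWithinAt f 0 J t) {s t : ℝ} (hs : s ∈ J) (ht : t ∈ J) :
    f t = f s := by
  have h2 := hJ.norm_image_sub_le_of_norm_hasDerivWithin_le (f' := fun _ => (0:ℝ)) (C := 0)
    h (fun x hx => by simp) hs ht
  have h0 : ‖f t - f s‖ ≤ 0 := by simpa using h2
  simpa [sub_eq_zero] using norm_le_zero_iff.mp h0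

lemma deriv_sq_zero' (pv : ℝ → E3) (g : ℝ → E3) (J : Set ℝ) (t : ℝ)
    (h : HasDerivWithinAt pv (cross3 (pv t) (g t)) J t) :
    HasDerivWithinAt (fun s => ⟪pv s, pv s⟫) 0 J t := by
  have h1 : ⟪pv t, cross3 (pv t) (g t)⟫ = 0 := inner_cross_self' _ _
  have h1' : ⟪cross3 (pv t) (g t), pv t⟫ = 0 := by rw [real_inner_comm]; exact h1
  have h2 := h.inner ℝ h
  rw [h1, h1', add_zero] at h2
  exact h2

/-- if a solution of (60) on an interval J containing 0 has p(0) = 0,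
then p ≡ 0 on J and ‖π‖ is constant on J. -/
theorem statement3 (I1 I2 I3 M1 M2 M3 : ℝ)
    (hI1 : 0 < I1) (hI2 : 0 < I2) (hI3 : 0 < I3)
    (hM1 : 0 < M1) (hM2 : 0 < M2) (hM3 : 0 < M3)
    (J : Set ℝ) (hJ : J.OrdConnected) (h0 : (0 : ℝ) ∈ J)
    (pm pv : ℝ → E3) (hsol : IsSol60On I1 I2 I3 M1 M2 M3 J pm pv)
    (hpv0 : pv 0 = 0) :
    (∀ t ∈ J, pv t = 0) ∧ (∀ s ∈ J, ∀ t ∈ J, ‖pm t‖ = ‖pm s‖) := by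
  obtain ⟨hpm, hpv⟩ := hsol
  have hconv : Convex ℝ J := convex_iff_ordConnected.mpr hJ
  -- pv ≡ 0 on J
  have hpvz : ∀ t ∈ J, pv t = 0 := by
    intro t ht
    have hder : ∀ u ∈ J, HasDerivWithinAt (fun s => ⟪pv s, pv s⟫) 0 J u :=
      fun u hu => deriv_sq_zero' pv (fun s => Iinv I1 I2 I3 (pm s)) J u (hpv u hu)
    have hc : ⟪pv t, pv t⟫ = ⟪pv 0, pv 0⟫ := const_of_deriv0' hconv hder h0 ht
    rw [hpv0, inner_zero_left] at hc
    exact inner_self_eq_zero.mp hc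
  refine ⟨hpvz, ?_⟩
  -- norm of pm constant
  have hpm' : ∀ t ∈ J, HasDerivWithinAt pm (cross3 (pm t) (Iinv I1 I2 I3 (pm t))) J t := by
    intro t ht
    have := hpm t ht
    rwa [hpvz t ht, cross3_zero_left, add_zero] at this
  intro s hs t ht
  have hder : ∀ u ∈ J, HasDerivWithinAt (fun r => ⟪pm r, pm r⟫) 0 J u :=
    fun u hu => deriv_sq_zero' pm (fun r => Iinv I1 I2 I3 (pm r)) J u (hpm' u hu)
  have hc : ⟪pm t, pm t⟫ = ⟪pm s, pm s⟫ := const_of_deriv0' hconv hder hs ht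
  rw [real_inner_self_eq_norm_sq, real_inner_self_eq_norm_sq] at hc
  nlinarith [norm_nonneg (pm t), norm_nonneg (pm s)]
end
end

section
/- For every π₀ ∈ ℝ³, the map w ↦ (w, π₀ − (π₀·w)w, 0, π₀·w) is a bijection from the unit sphere S² = {w ∈ ℝ³ : ‖w‖ = 1} onto the fiber β⁻¹({(π₀, 0)}) ⊆ P̂; i.e. the blow-up of the point (π,p) = (π₀,0) is a two-sphere. Moreover, for c ∈ ℝ, the fiber β⁻¹({(π₀,0)}) contains a point with γ-coordinate equal to c if and only if |c| ≤ ‖π₀‖. -/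
noncomputable section

open scoped RealInnerProductSpace

lemma kvec_norm : ‖kvec‖ = 1 := by
  simp [kvec, vec3, EuclideanSpace.norm_eq, Fin.sum_univ_three]

lemma exists_unit_inner_eq (pi0 : E3) {c : ℝ} (hc : |c| ≤ ‖pi0‖) :
    ∃ w : E3, ‖w‖ = 1 ∧ ⟪pi0, w⟫ = c := by
  by_cases h0 : pi0 = 0
  · subst h0
    simp only [norm_zero] at hc
    have hc0 : c = 0 := abs_nonpos_iff.mp hc
    exact ⟨kvec, kvec_norm, by simp [hc0]⟩
  · set n := ‖pi0‖ with hn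
    have hnpos : 0 < n := norm_pos_iff.mpr h0
    have h2 : Module.finrank ℝ ((ℝ ∙ pi0)ᗮ : Submodule ℝ E3) = 2 := by
      have h := (ℝ ∙ pi0).finrank_add_finrank_orthogonal
      rw [finrank_span_singleton h0, finrank_euclideanSpace_fin] at h
      omega
    have hbot : ((ℝ ∙ pi0)ᗮ : Submodule ℝ E3) ≠ ⊥ := by
      intro h
      rw [h, finrank_bot] at h2
      omega
    obtain ⟨v, hv, hv0⟩ := Submodule.exists_mem_ne_zero_of_ne_bot hbot
    have hpv : ⟪pi0, v⟫ = 0 := by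
      have := (Submodule.mem_orthogonal _ v).mp hv pi0 (Submodule.mem_span_singleton_self pi0)
      exact this
    set u : E3 := ‖v‖⁻¹ • v with hu
    have hvn : ‖v‖ ≠ 0 := norm_ne_zero_iff.mpr hv0
    have hun : ‖u‖ = 1 := by
      rw [hu, norm_smul, norm_inv, norm_norm, inv_mul_cancel₀ hvn]
    have hpu : ⟪pi0, u⟫ = 0 := by
      rw [hu, real_inner_smul_right, hpv, mul_zero]
    set s : ℝ := Real.sqrt (1 - c ^ 2 / n ^ 2) with hs
    have hcn : c ^ 2 ≤ n ^ 2 := by nlinarith [abs_nonneg c, sq_abs c]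
    have hsnn : 0 ≤ 1 - c ^ 2 / n ^ 2 := by
      rw [sub_nonneg, div_le_one (by positivity)]
      exact hcn
    have hs2 : s ^ 2 = 1 - c ^ 2 / n ^ 2 := Real.sq_sqrt hsnn
    refine ⟨(c / n ^ 2) • pi0 + s • u, ?_, ?_⟩
    · have hortho : ⟪(c / n ^ 2) • pi0, s • u⟫ = 0 := by
        rw [real_inner_smul_left, real_inner_smul_right, hpu]; ring
      have hsq : ‖(c / n ^ 2) • pi0 + s • u‖ ^ 2 = 1 := by
        have hsabs : ‖s‖ = s := abs_of_nonneg (Real.sqrt_nonneg _)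
        rw [norm_add_sq_real, hortho, norm_smul, norm_smul, hun, hsabs, ← hn,
          Real.norm_eq_abs]
        have hnne : n ≠ 0 := hnpos.ne'
        have h1 : (|c / n ^ 2| * n) ^ 2 = c ^ 2 / n ^ 2 := by
          rw [mul_pow, sq_abs]; field_simp
        rw [h1, mul_one, hs2]; ring
      nlinarith [norm_nonneg ((c / n ^ 2) • pi0 + s • u)]
    · rw [inner_add_right, real_inner_smul_right, real_inner_smul_right, hpu,
        real_inner_self_eq_norm_sq]
      field_simp
      rw [← hn]; ring

/-- the blow-up of the point (π,p) = (π₀,0) is a two-sphere: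
w ↦ (w, π₀ − (π₀·w)w, 0, π₀·w) is a bijection from S² onto β⁻¹({(π₀,0)});
moreover the fiber meets {γ = c} if and only if |c| ≤ ‖π₀‖. -/
theorem statement9 (pi0 : E3) :
    Set.BijOn (fun w : E3 => (w, pi0 - ⟪pi0, w⟫ • w, (0 : ℝ), ⟪pi0, w⟫))
      {w : E3 | ‖w‖ = 1} {x ∈ Phat | blowdown x = (pi0, 0)} ∧
    ∀ c : ℝ, (∃ x ∈ {x ∈ Phat | blowdown x = (pi0, 0)}, x.2.2.2 = c) ↔ |c| ≤ ‖pi0‖ := by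
  have hmaps : Set.MapsTo (fun w : E3 => (w, pi0 - ⟪pi0, w⟫ • w, (0 : ℝ), ⟪pi0, w⟫))
      {w : E3 | ‖w‖ = 1} {x ∈ Phat | blowdown x = (pi0, 0)} := by
    intro w hw
    simp only [Set.mem_setOf_eq] at hw
    constructor
    · refine ⟨hw, ?_, le_refl 0⟩
      show ⟪w, pi0 - ⟪pi0, w⟫ • w⟫ = 0
      rw [inner_sub_right, real_inner_smul_right, real_inner_comm w pi0,
        real_inner_self_eq_norm_sq, hw]
      ring
    · simp [blowdown]
  have hkey : ∀ x ∈ {x ∈ Phat | blowdown x = (pi0, 0)},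
      ‖x.1‖ = 1 ∧ x.2.2.1 = 0 ∧ ⟪pi0, x.1⟫ = x.2.2.2 ∧ x.2.1 = pi0 - x.2.2.2 • x.1 := by
    rintro x ⟨⟨hn, ho, _⟩, hb⟩
    have hb1 : x.2.1 + x.2.2.2 • x.1 = pi0 := congrArg Prod.fst hb
    have hb2 : x.2.2.1 • x.1 = (0 : E3) := congrArg Prod.snd hb
    have hx1 : x.1 ≠ 0 := by
      intro h; rw [h, norm_zero] at hn; norm_num at hn
    have ha0 : x.2.2.1 = 0 := by
      rcases smul_eq_zero.mp hb2 with h | h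
      · exact h
      · exact absurd h hx1
    have ho' : ⟪x.2.1, x.1⟫ = 0 := by rw [real_inner_comm]; exact ho
    have hγ : ⟪pi0, x.1⟫ = x.2.2.2 := by
      rw [← hb1, inner_add_left, real_inner_smul_left, ho',
        real_inner_self_eq_norm_sq, hn]
      ring
    exact ⟨hn, ha0, hγ, eq_sub_of_add_eq hb1⟩
  refine ⟨⟨hmaps, ?_, ?_⟩, ?_⟩
  · intro a _ b _ h
    exact congrArg Prod.fst h
  · intro x hx
    obtain ⟨hn, ha0, hγ, hw⟩ := hkey x hx
    refine ⟨x.1, hn, ?_⟩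
    show (x.1, pi0 - ⟪pi0, x.1⟫ • x.1, (0 : ℝ), ⟪pi0, x.1⟫) = x
    have hx_eta : x = (x.1, x.2.1, x.2.2.1, x.2.2.2) := rfl
    rw [hx_eta]
    simp only [Prod.mk.injEq]
    exact ⟨trivial, by rw [hγ, hw], ha0.symm, hγ⟩
  · intro c
    constructor
    · rintro ⟨x, hx, rfl⟩
      obtain ⟨hn, _, hγ, _⟩ := hkey x hx
      calc |x.2.2.2| = |⟪pi0, x.1⟫| := by rw [hγ]
        _ ≤ ‖pi0‖ * ‖x.1‖ := abs_real_inner_le_norm pi0 x.1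
        _ = ‖pi0‖ := by rw [hn, mul_one]
    · intro hc
      obtain ⟨w, hw, hwc⟩ := exists_unit_inner_eq pi0 hc
      exact ⟨(w, pi0 - ⟪pi0, w⟫ • w, (0 : ℝ), ⟪pi0, w⟫), hmaps hw, hwc⟩
end
end
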